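/- Let Ψ be a nonempty closed convex subset of ℝⁿ and let g : ℝⁿ → ℝⁿ be Lipschitz continuous with constant l. Define the set-valued mapping ψ(x) := g(x) + Ψ (the translate of Ψ by g(x)). Then ψ satisfies ‖P_{ψ(r)}(y) − P_{ψ(s)}(y)‖ ≤ l‖r − s‖ for all y, r, s ∈ ℝⁿ. -/
import Mathlib


open scoped RealInnerProductSpace
open MeasureTheory

/- Metric projection onto a set `C ⊆ ℝⁿ`: when `C` is nonempty, closed and convex this is
the unique nearest point of `C`. -/
open Classical in
noncomputable def metricProj {d : ℕ} (C : Set (EuclideanSpace ℝ (Fin d)))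
    (x : EuclideanSpace ℝ (Fin d)) : EuclideanSpace ℝ (Fin d) :=
  if h : ∃ y, y ∈ C ∧ ∀ z ∈ C, ‖x - y‖ ≤ ‖x - z‖ then h.choose else x

open scoped Pointwise

open Classical in
lemma metricProj_spec {d : ℕ} (C : Set (EuclideanSpace ℝ (Fin d))) (hne : C.Nonempty)
    (hcl : IsClosed C) (hconv : Convex ℝ C) (x : EuclideanSpace ℝ (Fin d)) :
    metricProj C x ∈ C ∧ ∀ z ∈ C, ⟪x - metricProj C x, z - metricProj C x⟫ ≤ 0 := by
  have hex : ∃ y, y ∈ C ∧ ∀ z ∈ C, ‖x - y‖ ≤ ‖x - z‖ := by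
    obtain ⟨v, hv, heq⟩ := exists_norm_eq_iInf_of_complete_convex hne hcl.isComplete hconv x
    refine ⟨v, hv, fun z hz => ?_⟩
    rw [heq]
    exact ciInf_le ⟨0, Set.forall_mem_range.2 fun _ => norm_nonneg _⟩ (⟨z, hz⟩ : C)
  have hp : metricProj C x = hex.choose := by simp [metricProj, hex]
  obtain ⟨hmem, hmin⟩ := hex.choose_spec
  rw [hp]
  refine ⟨hmem, ?_⟩
  have : Nonempty C := hne.to_subtype
  have heq : ‖x - hex.choose‖ = ⨅ w : C, ‖x - w‖ := by
    apply le_antisymm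
    · exact le_ciInf fun w => hmin w w.2
    · exact ciInf_le ⟨0, Set.forall_mem_range.2 fun _ => norm_nonneg _⟩ (⟨_, hmem⟩ : C)
  exact (norm_eq_iInf_iff_real_inner_le_zero hconv hmem).mp heq

/-- If `ψ x = g x + Ψ` (moving set) with `Ψ` nonempty closed convex and `g`
`l`-Lipschitz, then `‖P_{ψ r}(y) − P_{ψ s}(y)‖ ≤ l ‖r − s‖` for all `y, r, s`. -/
theorem stmt_2 {d : ℕ} (Ψ : Set (EuclideanSpace ℝ (Fin d))) (hne : Ψ.Nonempty)
    (hcl : IsClosed Ψ) (hconv : Convex ℝ Ψ)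
    (g : EuclideanSpace ℝ (Fin d) → EuclideanSpace ℝ (Fin d)) (l : ℝ)
    (hg : ∀ y z, ‖g y - g z‖ ≤ l * ‖y - z‖)
    (ψ : EuclideanSpace ℝ (Fin d) → Set (EuclideanSpace ℝ (Fin d)))
    (hψ : ∀ x, ψ x = g x +ᵥ Ψ) :
    ∀ y r s, ‖metricProj (ψ r) y - metricProj (ψ s) y‖ ≤ l * ‖r - s‖ := by
  intro y r s
  set a := g r
  set b := g s
  have hCne : ∀ c : EuclideanSpace ℝ (Fin d), (c +ᵥ Ψ).Nonempty := fun c =>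
    hne.vadd_set
  have hCcl : ∀ c : EuclideanSpace ℝ (Fin d), IsClosed (c +ᵥ Ψ) := fun c =>
    (Homeomorph.addLeft c).isClosedMap _ hcl
  have hCconv : ∀ c : EuclideanSpace ℝ (Fin d), Convex ℝ (c +ᵥ Ψ) := fun c =>
    hconv.vadd c
  rw [hψ r, hψ s]
  obtain ⟨hu, hu2⟩ := metricProj_spec (a +ᵥ Ψ) (hCne a) (hCcl a) (hCconv a) y
  obtain ⟨hv, hv2⟩ := metricProj_spec (b +ᵥ Ψ) (hCne b) (hCcl b) (hCconv b) y
  set u := metricProj (a +ᵥ Ψ) y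
  set v := metricProj (b +ᵥ Ψ) y
  obtain ⟨u', hu', huu⟩ := hu
  obtain ⟨v', hv', hvv⟩ := hv
  -- u = a + u', v = b + v'
  have h1 : ⟪y - u, (a + v') - u⟫ ≤ 0 := hu2 _ ⟨v', hv', rfl⟩
  have h2 : ⟪y - v, (b + u') - v⟫ ≤ 0 := hv2 _ ⟨u', hu', rfl⟩
  have huv : u - v = (a - b) + (u' - v') := by
    rw [← huu, ← hvv]; simp [vadd_eq_add]; abel
  have hw1 : (a + v') - u = -((u - v) - (a - b)) := by
    rw [← huu, ← hvv]; simp [vadd_eq_add]; abel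
  have hw2 : (b + u') - v = (u - v) - (a - b) := by
    rw [← huu, ← hvv]; simp [vadd_eq_add]; abel
  set w := (u - v) - (a - b)
  rw [hw1] at h1
  rw [hw2] at h2
  have h3 : ⟪u - v, w⟫ ≤ 0 := by
    have e : u - v = (y - v) - (y - u) := by abel
    rw [inner_neg_right] at h1
    rw [e, inner_sub_left]
    linarith
  have h4 : ‖u - v‖ ^ 2 ≤ ⟪u - v, a - b⟫ := by
    have : ⟪u - v, w⟫ = ⟪u - v, u - v⟫ - ⟪u - v, a - b⟫ := by
      rw [← inner_sub_right]
    rw [← real_inner_self_eq_norm_sq]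
    linarith [this ▸ h3]
  have h5 : ‖u - v‖ ^ 2 ≤ ‖u - v‖ * ‖a - b‖ :=
    h4.trans (real_inner_le_norm _ _)
  have h6 : ‖u - v‖ ≤ ‖a - b‖ := by
    nlinarith [norm_nonneg (u - v), norm_nonneg (a - b)]
  exact h6.trans (hg r s)
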